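/- Let μ₀ be a probability measure on [−1,1], Θ = [−1,1]^{ℤ²} with the product σ-algebra and product probability measure ℙ = ⊗_{ℤ²} μ₀, 𝔼 the expectation with respect to ℙ, and for γ ∈ ℤ² let T(γ) : Θ → Θ be the shift (T(γ)ω)_{γ'} = ω_{γ'+γ}. Let (A_ω)_{ω∈Θ}, (B_ω)_{ω∈Θ} be families of kernels A_ω, B_ω : ℝ² × ℝ² → ℂ, jointly measurable in (ω,x,y), jointly continuous in (x,y) off the diagonal, and satisfying, uniformly in ω, |A_ω(x,y)| ≤ C (1 + |ln ‖x−y‖|) e^{−δ‖x−y‖} and |B_ω(x,y)| ≤ C (1 + ‖x−y‖^{−1}) e^{−δ‖x−y‖} for some C, δ > 0 and all x ≠ y. Assume that for every γ ∈ ℤ² and all x, y ∈ ℝ², A_ω(x−γ, y−γ) B_ω(y−γ, x−γ) = A_{T(γ)ω}(x,y) B_{T(γ)ω}(y,x). Then, with Ω = [0,1]², the integrals below are absolutely convergent and 𝔼( ∫_Ω dx ∫_{ℝ²} dy A_ω(x,y) B_ω(y,x) ) = 𝔼( ∫_Ω dx ∫_{ℝ²} dy B_ω(x,y) A_ω(y,x)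 ). -/

import Mathlib

open MeasureTheory Filter Set

set_option maxHeartbeats 2000000

noncomputable section

/-- The disorder configuration space `Θ = [−1,1]^{ℤ²}`, with the product σ-algebra. -/
abbrev DisorderSpace : Type := (ℤ × ℤ) → Set.Icc (-1 : ℝ) 1

/-- The shift `(T(γ)ω)_{γ'} = ω_{γ'+γ}`. -/
def disorderShift (γ : ℤ × ℤ) (ω : DisorderSpace) : DisorderSpace :=
  fun γ' => ω (γ' + γ)

/-- The Euclidean norm on `ℝ²` realized as `ℝ × ℝ`. -/
def eNorm2 (x : ℝ × ℝ) : ℝ := Real.sqrt (x.1 ^ 2 + x.2 ^ 2)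

/-- Embedding of the lattice `ℤ²` into `ℝ²`. -/
def latR2 (γ : ℤ × ℤ) : ℝ × ℝ := ((γ.1 : ℝ), (γ.2 : ℝ))

namespace TraceCyc

/-! ### A one-dimensional integrable profile -/

/-- 1D profile function dominating the kernels' singular factors. -/
def phi (b : ℝ) (t : ℝ) : ℝ :=
  (1 + |Real.log (|t|)|) * (1 + (Real.sqrt (|t|))⁻¹) * Real.exp (-b * |t|)

lemma phi_nonneg (b t : ℝ) : 0 ≤ phi b t := by
  unfold phi
  positivity

lemma measurable_phi (b : ℝ) : Measurable (phi b) := by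
  unfold phi
  exact ((measurable_const.add (Real.measurable_log.comp measurable_abs).abs).mul
    (measurable_const.add ((measurable_abs.sqrt).inv))).mul
    ((measurable_abs.const_mul (-b)).exp)

lemma phi_even (b t : ℝ) : phi b (-t) = phi b t := by simp [phi]

lemma phi_bound_small {b t : ℝ} (hb : 0 < b) (ht : 0 < t) (ht1 : t ≤ 1) :
    phi b t ≤ 10 * t ^ (-(3:ℝ)/4) := by
  have habs : |t| = t := abs_of_pos ht
  have h1 : 1 + |Real.log t| ≤ 5 * t ^ (-(1:ℝ)/4) := by
    have hlt : Real.log t ≤ 0 := Real.log_nonpos ht.le ht1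
    have hinv : (1:ℝ) ≤ t⁻¹ := (one_le_inv_iff₀.2 ⟨ht, ht1⟩)
    have h4 : |Real.log t| = Real.log t⁻¹ := by
      rw [abs_of_nonpos hlt, Real.log_inv]
    have hr : Real.log t⁻¹ ≤ 4 * (t⁻¹ ^ ((1:ℝ)/4)) := by
      have h0 : (0:ℝ) < t⁻¹ := inv_pos.2 ht
      have := Real.log_le_sub_one_of_pos (Real.rpow_pos_of_pos h0 ((1:ℝ)/4))
      have hlog : Real.log (t⁻¹ ^ ((1:ℝ)/4)) = (1/4) * Real.log t⁻¹ :=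
        Real.log_rpow h0 _
      nlinarith [Real.rpow_nonneg h0.le ((1:ℝ)/4)]
    have hone : (1:ℝ) ≤ t⁻¹ ^ ((1:ℝ)/4) :=
      Real.one_le_rpow hinv (by norm_num)
    have heq : t⁻¹ ^ ((1:ℝ)/4) = t ^ (-(1:ℝ)/4) := by
      rw [Real.inv_rpow ht.le, ← Real.rpow_neg ht.le]
      norm_num
    calc 1 + |Real.log t| ≤ 1 + 4 * (t⁻¹ ^ ((1:ℝ)/4)) := by rw [h4]; linarith
      _ ≤ 5 * (t⁻¹ ^ ((1:ℝ)/4)) := by linarith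
      _ = 5 * t ^ (-(1:ℝ)/4) := by rw [heq]
  have h2 : 1 + (Real.sqrt t)⁻¹ ≤ 2 * t ^ (-(1:ℝ)/2) := by
    have hs : Real.sqrt t = t ^ ((1:ℝ)/2) := Real.sqrt_eq_rpow t
    have heq : (Real.sqrt t)⁻¹ = t ^ (-(1:ℝ)/2) := by
      rw [hs, ← Real.rpow_neg ht.le]
      norm_num
    have hone : (1:ℝ) ≤ t ^ (-(1:ℝ)/2) := by
      rw [← heq, hs]
      rw [one_le_inv_iff₀]
      constructor
      · exact Real.rpow_pos_of_pos ht _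
      · calc t ^ ((1:ℝ)/2) ≤ 1 ^ ((1:ℝ)/2) :=
              Real.rpow_le_rpow ht.le ht1 (by norm_num)
          _ = 1 := Real.one_rpow _
    rw [heq]; linarith
  have hexp : Real.exp (-b * t) ≤ 1 := by
    rw [Real.exp_le_one_iff]
    nlinarith
  unfold phi
  rw [habs]
  have hmul : (1 + |Real.log t|) * (1 + (Real.sqrt t)⁻¹)
      ≤ (5 * t ^ (-(1:ℝ)/4)) * (2 * t ^ (-(1:ℝ)/2)) := by
    apply mul_le_mul h1 h2 (by positivity) (by positivity)
  have hr : (5 * t ^ (-(1:ℝ)/4)) * (2 * t ^ (-(1:ℝ)/2)) = 10 * t ^ (-(3:ℝ)/4) := by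
    rw [show (5 * t ^ (-(1:ℝ)/4)) * (2 * t ^ (-(1:ℝ)/2))
        = 10 * (t ^ (-(1:ℝ)/4) * t ^ (-(1:ℝ)/2)) by ring, ← Real.rpow_add ht]
    norm_num
  have hf1 : (0:ℝ) ≤ (1 + |Real.log t|) * (1 + (Real.sqrt t)⁻¹) := by positivity
  calc (1 + |Real.log t|) * (1 + (Real.sqrt t)⁻¹) * Real.exp (-b*t)
      ≤ (1 + |Real.log t|) * (1 + (Real.sqrt t)⁻¹) * 1 :=
        mul_le_mul_of_nonneg_left hexp hf1
    _ = (1 + |Real.log t|) * (1 + (Real.sqrt t)⁻¹) := by ring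
    _ ≤ (5 * t ^ (-(1:ℝ)/4)) * (2 * t ^ (-(1:ℝ)/2)) := hmul
    _ = 10 * t ^ (-(3:ℝ)/4) := hr

lemma phi_bound_large {b t : ℝ} (hb : 0 < b) (ht : 1 ≤ t) :
    phi b t ≤ (2 * (1 + 2/b)) * Real.exp (-(b/2) * t) := by
  have ht0 : (0:ℝ) < t := lt_of_lt_of_le one_pos ht
  have habs : |t| = t := abs_of_pos ht0
  have h1 : 1 + |Real.log t| ≤ 1 + t := by
    have := Real.log_le_sub_one_of_pos ht0
    have hl0 : 0 ≤ Real.log t := Real.log_nonneg ht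
    rw [abs_of_nonneg hl0]; linarith
  have h2 : 1 + (Real.sqrt t)⁻¹ ≤ 2 := by
    have hs : (1:ℝ) ≤ Real.sqrt t := by
      rw [show (1:ℝ) = Real.sqrt 1 by simp]
      exact Real.sqrt_le_sqrt ht
    have : (Real.sqrt t)⁻¹ ≤ 1 := inv_le_one_of_one_le₀ hs
    linarith
  have hexp : 1 + (b/2) * t ≤ Real.exp ((b/2)*t) := by
    have := Real.add_one_le_exp ((b/2)*t)
    linarith
  have h6 : (1:ℝ) + t ≤ (1 + 2/b) * (1 + (b/2)*t) := by
    have e1 : (0:ℝ) ≤ (b/2)*t := by positivity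
    have e2 : (0:ℝ) ≤ 2/b := by positivity
    have hb' : b ≠ 0 := ne_of_gt hb
    have h5 : (1 + 2/b) * (1 + (b/2)*t) = 1 + (b/2)*t + 2/b + t := by
      field_simp
      ring
    rw [h5]
    linarith
  have h3 : (1 + t) * Real.exp (-(b/2) * t) ≤ (1 + 2/b) := by
    have hpos : (0:ℝ) < Real.exp ((b/2)*t) := Real.exp_pos _
    have hexpneg : Real.exp (-(b/2)*t) = (Real.exp ((b/2)*t))⁻¹ := by
      rw [← Real.exp_neg]; ring_nf
    rw [hexpneg, mul_inv_le_iff₀ hpos]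
    calc 1 + t ≤ (1 + 2/b) * (1 + (b/2)*t) := h6
      _ ≤ (1 + 2/b) * Real.exp ((b/2)*t) :=
          mul_le_mul_of_nonneg_left hexp (by positivity)
  have hsplit : Real.exp (-b * t) = Real.exp (-(b/2)*t) * Real.exp (-(b/2)*t) := by
    rw [← Real.exp_add]; ring_nf
  unfold phi
  rw [habs]
  calc (1 + |Real.log t|) * (1 + (Real.sqrt t)⁻¹) * Real.exp (-b * t)
      ≤ ((1+t) * 2) * Real.exp (-b*t) := by
        apply mul_le_mul_of_nonneg_right _ (Real.exp_pos _).le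
        apply mul_le_mul h1 h2 (by positivity) (by linarith)
    _ = 2 * ((1+t) * Real.exp (-(b/2)*t)) * Real.exp (-(b/2)*t) := by
        rw [hsplit]; ring
    _ ≤ 2 * (1 + 2/b) * Real.exp (-(b/2)*t) := by
        apply mul_le_mul_of_nonneg_right _ (Real.exp_pos _).le
        nlinarith [Real.exp_pos (-(b/2)*t)]
    _ = (2 * (1 + 2/b)) * Real.exp (-(b/2)*t) := by ring

lemma integrableOn_phi_Ioi {b : ℝ} (hb : 0 < b) : IntegrableOn (phi b) (Ioi (0:ℝ)) := by
  have hsplit : Ioi (0:ℝ) = Ioc 0 1 ∪ Ioi 1 := (Ioc_union_Ioi_eq_Ioi zero_le_one).symm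
  rw [hsplit]
  apply IntegrableOn.union
  · have hint : IntegrableOn (fun t : ℝ => 10 * t ^ (-(3:ℝ)/4)) (Ioc 0 1) := by
      have := (intervalIntegral.intervalIntegrable_rpow'
        (show (-1:ℝ) < -(3:ℝ)/4 by norm_num) (a := 0) (b := 1))
      rw [intervalIntegrable_iff_integrableOn_Ioc_of_le zero_le_one] at this
      exact this.const_mul 10
    apply Integrable.mono' hint ((measurable_phi b).aestronglyMeasurable)
    filter_upwards [ae_restrict_mem measurableSet_Ioc] with t ht
    rw [Real.norm_eq_abs, abs_of_nonneg (phi_nonneg b t)]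
    exact phi_bound_small hb ht.1 ht.2
  · have hint : IntegrableOn (fun t : ℝ => (2 * (1 + 2/b)) * Real.exp (-(b/2) * t)) (Ioi 1) :=
      (exp_neg_integrableOn_Ioi 1 (half_pos hb)).const_mul _
    apply Integrable.mono' hint ((measurable_phi b).aestronglyMeasurable)
    filter_upwards [ae_restrict_mem measurableSet_Ioi] with t ht
    rw [Real.norm_eq_abs, abs_of_nonneg (phi_nonneg b t)]
    exact phi_bound_large hb (le_of_lt ht)

lemma integrable_phi {b : ℝ} (hb : 0 < b) : Integrable (phi b) := by
  have hIoi := integrableOn_phi_Ioi hb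
  have hIci : IntegrableOn (phi b) (Ici (0:ℝ)) :=
    hIoi.congr_set_ae (Ioi_ae_eq_Ici (a := (0:ℝ))).symm
  have hIio : IntegrableOn (phi b) (Iio (0:ℝ)) := by
    have hneg := (MeasurePreserving.integrableOn_comp_preimage
      (Measure.measurePreserving_neg (volume : Measure ℝ))
      (Homeomorph.neg ℝ).measurableEmbedding).2 hIoi
    have hpre : (Neg.neg : ℝ → ℝ) ⁻¹' Ioi (0:ℝ) = Iio 0 := by
      ext x; simp
    rw [hpre] at hneg
    apply hneg.congr_fun _ measurableSet_Iio
    intro x _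
    exact (phi_even b x)
  rw [← integrableOn_univ, show (univ : Set ℝ) = Iio 0 ∪ Ici 0 by simp [Iio_union_Ici]]
  exact hIio.union hIci

/-! ### The key pointwise domination -/

lemma abs_fst_le_eNorm2 (z : ℝ × ℝ) : |z.1| ≤ eNorm2 z := by
  rw [eNorm2, ← Real.sqrt_sq_eq_abs]
  apply Real.sqrt_le_sqrt
  nlinarith [sq_nonneg z.2, sq_abs z.1]

lemma abs_snd_le_eNorm2 (z : ℝ × ℝ) : |z.2| ≤ eNorm2 z := by
  rw [eNorm2, ← Real.sqrt_sq_eq_abs]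
  apply Real.sqrt_le_sqrt
  nlinarith [sq_nonneg z.1, sq_abs z.2]

lemma eNorm2_nonneg (z : ℝ × ℝ) : 0 ≤ eNorm2 z := Real.sqrt_nonneg _

lemma sqrt_mul_le_eNorm2 (z : ℝ × ℝ) :
    Real.sqrt (|z.1|) * Real.sqrt (|z.2|) ≤ eNorm2 z := by
  rw [← Real.sqrt_mul (abs_nonneg _), eNorm2]
  apply Real.sqrt_le_sqrt
  nlinarith [sq_nonneg (|z.1| - |z.2|), sq_abs z.1, sq_abs z.2, abs_nonneg z.1, abs_nonneg z.2]

lemma eNorm2_neg (z : ℝ × ℝ) : eNorm2 (-z) = eNorm2 z := by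
  simp [eNorm2]

lemma key_dom {C δ : ℝ} (hC : 0 ≤ C) (hδ : 0 < δ) (z : ℝ × ℝ)
    (h1 : z.1 ≠ 0) (h2 : z.2 ≠ 0) :
    (C * (1 + |Real.log (eNorm2 z)|) * Real.exp (-δ * eNorm2 z)) *
      (C * (1 + (eNorm2 z)⁻¹) * Real.exp (-δ * eNorm2 z))
    ≤ (C^2 * (1 + 1/δ)) * (phi (δ/2) z.1 * phi (δ/2) z.2) := by
  set n := eNorm2 z with hn
  have a1 : (0:ℝ) < |z.1| := abs_pos.2 h1
  have a2 : (0:ℝ) < |z.2| := abs_pos.2 h2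
  have hn1 : |z.1| ≤ n := abs_fst_le_eNorm2 z
  have hn2 : |z.2| ≤ n := abs_snd_le_eNorm2 z
  have hnpos : 0 < n := lt_of_lt_of_le a1 hn1
  set s1 := Real.sqrt (|z.1|) with hs1
  set s2 := Real.sqrt (|z.2|) with hs2
  have hs1p : 0 < s1 := Real.sqrt_pos.2 a1
  have hs2p : 0 < s2 := Real.sqrt_pos.2 a2
  have hss : s1 * s2 ≤ n := sqrt_mul_le_eNorm2 z
  set l1 := |Real.log (|z.1|)| with hl1
  set l2 := |Real.log (|z.2|)| with hl2
  set u1 := Real.exp (-(δ/2) * |z.1|) with hu1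
  set u2 := Real.exp (-(δ/2) * |z.2|) with hu2
  set L := (1 + l1) * (1 + l2) with hL
  have habs1 : 0 ≤ l1 := abs_nonneg _
  have habs2 : 0 ≤ l2 := abs_nonneg _
  have hL1 : (1:ℝ) ≤ L := by nlinarith
  have hE2 : Real.exp (-δ * n) ≤ u1 * u2 := by
    rw [hu1, hu2, ← Real.exp_add]
    apply Real.exp_le_exp.2
    nlinarith
  have hlog : 1 + |Real.log n| ≤ L + n := by
    rcases le_or_gt n 1 with hc | hc
    · have hlt : Real.log n ≤ 0 := Real.log_nonpos hnpos.le hc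
      have hmono : Real.log (s1 * s2) ≤ Real.log n :=
        Real.log_le_log (by positivity) hss
      have hlogs : Real.log (s1 * s2) = Real.log (|z.1|) / 2 + Real.log (|z.2|) / 2 := by
        rw [Real.log_mul (ne_of_gt hs1p) (ne_of_gt hs2p), hs1, hs2,
          Real.log_sqrt (abs_nonneg _), Real.log_sqrt (abs_nonneg _)]
      have hb1 : -Real.log (|z.1|) ≤ l1 := neg_le_abs _
      have hb2 : -Real.log (|z.2|) ≤ l2 := neg_le_abs _
      have habs : |Real.log n| = -Real.log n := abs_of_nonpos hlt
      rw [habs]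
      rw [hlogs] at hmono
      have hval : -Real.log n ≤ l1/2 + l2/2 := by nlinarith [hb1, hb2]
      nlinarith [eNorm2_nonneg z]
    · have hl0 : 0 ≤ Real.log n := Real.log_nonneg hc.le
      have := Real.log_le_sub_one_of_pos hnpos
      rw [abs_of_nonneg hl0]
      nlinarith
  have hinv : 1 + n⁻¹ ≤ (1 + s1⁻¹) * (1 + s2⁻¹) := by
    have h1' : n⁻¹ ≤ (s1 * s2)⁻¹ := by
      apply inv_anti₀ (by positivity) hss
    have h2' : (s1 * s2)⁻¹ = s1⁻¹ * s2⁻¹ := by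
      rw [mul_inv]
    have e1 : 0 ≤ s1⁻¹ := by positivity
    have e2 : 0 ≤ s2⁻¹ := by positivity
    nlinarith
  have hEpos : 0 ≤ Real.exp (-δ * n) := (Real.exp_pos _).le
  have hexp1 : Real.exp (-δ * n) ≤ 1 := by
    rw [Real.exp_le_one_iff]; nlinarith
  have hnδ : n * Real.exp (-δ * n) ≤ 1/δ := by
    have h := Real.add_one_le_exp (δ * n)
    have hm : Real.exp (δ * n) * Real.exp (-δ * n) = 1 := by
      rw [neg_mul, ← Real.exp_add, add_neg_cancel, Real.exp_zero]
    have hδn : δ * n ≤ Real.exp (δ * n) := by linarith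
    have hstep : δ * n * Real.exp (-δ * n) ≤ Real.exp (δ * n) * Real.exp (-δ * n) :=
      mul_le_mul_of_nonneg_right hδn hEpos
    rw [hm] at hstep
    rw [le_div_iff₀ hδ]
    nlinarith
  have hfin : (L + n) * Real.exp (-δ * n) ≤ (1 + 1/δ) * L := by
    have hLe : L * Real.exp (-δ * n) ≤ L := by nlinarith
    have hd : (0:ℝ) < 1/δ := by positivity
    nlinarith
  set X := (1 + |Real.log n|) * Real.exp (-δ * n) with hX0
  set Y := (1 + n⁻¹) * Real.exp (-δ * n) with hY0
  have hlogn0 : 0 ≤ |Real.log n| := abs_nonneg _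
  have hninv0 : 0 ≤ n⁻¹ := by positivity
  have hXnn : 0 ≤ X := by rw [hX0]; positivity
  have hYnn : 0 ≤ Y := by rw [hY0]; positivity
  have hu1p : 0 < u1 := Real.exp_pos _
  have hu2p : 0 < u2 := Real.exp_pos _
  have hs1i : 0 ≤ s1⁻¹ := by positivity
  have hs2i : 0 ≤ s2⁻¹ := by positivity
  have hX : X ≤ (1 + 1/δ) * L := by
    rw [hX0]
    calc (1 + |Real.log n|) * Real.exp (-δ * n)
        ≤ (L + n) * Real.exp (-δ * n) := mul_le_mul_of_nonneg_right hlog hEpos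
      _ ≤ (1 + 1/δ) * L := hfin
  have hY : Y ≤ ((1 + s1⁻¹) * (1 + s2⁻¹)) * (u1 * u2) := by
    rw [hY0]
    apply mul_le_mul hinv hE2 hEpos (by positivity)
  have hXY : X * Y ≤ ((1 + 1/δ) * L) * (((1 + s1⁻¹) * (1 + s2⁻¹)) * (u1 * u2)) := by
    apply mul_le_mul hX hY hYnn
    have : (0:ℝ) < 1/δ := by positivity
    nlinarith
  calc (C * (1 + |Real.log n|) * Real.exp (-δ * n)) *
      (C * (1 + n⁻¹) * Real.exp (-δ * n))
      = C^2 * (X * Y) := by rw [hX0, hY0]; ring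
    _ ≤ C^2 * (((1 + 1/δ) * L) * (((1 + s1⁻¹) * (1 + s2⁻¹)) * (u1 * u2))) := by
        apply mul_le_mul_of_nonneg_left hXY (by positivity)
    _ = (C^2 * (1 + 1/δ)) * (phi (δ/2) z.1 * phi (δ/2) z.2) := by
        simp only [phi]
        rw [hL, hl1, hl2, hs1, hs2, hu1, hu2]
        ring

/-! ### The dominating kernel on pairs of points -/

/-- The dominating kernel on pairs of points. -/
def Gd (b : ℝ) (q : (ℝ × ℝ) × (ℝ × ℝ)) : ℝ :=
  phi b (q.1.1 - q.2.1) * phi b (q.1.2 - q.2.2)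

lemma Gd_nonneg (b : ℝ) (q : (ℝ × ℝ) × (ℝ × ℝ)) : 0 ≤ Gd b q :=
  mul_nonneg (phi_nonneg _ _) (phi_nonneg _ _)

lemma measurable_Gd (b : ℝ) : Measurable (Gd b) :=
  ((measurable_phi b).comp ((measurable_fst.fst).sub (measurable_snd.fst))).mul
    ((measurable_phi b).comp ((measurable_fst.snd).sub (measurable_snd.snd)))

lemma integrable_Gd_section_left {b : ℝ} (hb : 0 < b) (x : ℝ × ℝ) :
    Integrable (fun y : ℝ × ℝ => Gd b (x, y)) := by
  have h1 : Integrable (fun t : ℝ => phi b (x.1 - t)) :=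
    (integrable_comp_sub_left (phi b) x.1).2 (integrable_phi hb)
  have h2 : Integrable (fun t : ℝ => phi b (x.2 - t)) :=
    (integrable_comp_sub_left (phi b) x.2).2 (integrable_phi hb)
  have := h1.mul_prod h2
  rw [← Measure.volume_eq_prod] at this
  exact this

lemma integral_Gd_section_left {b : ℝ} (x : ℝ × ℝ) :
    (∫ y : ℝ × ℝ, Gd b (x, y)) = (∫ t : ℝ, phi b t) ^ 2 := by
  rw [Measure.volume_eq_prod]
  calc (∫ y : ℝ × ℝ, Gd b (x, y) ∂(volume.prod volume))
      = ∫ z : ℝ × ℝ, (fun t => phi b (x.1 - t)) z.1 * (fun t => phi b (x.2 - t)) z.2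
          ∂((volume : Measure ℝ).prod volume) := rfl
    _ = (∫ t : ℝ, phi b (x.1 - t)) * (∫ t : ℝ, phi b (x.2 - t)) :=
        integral_prod_mul (fun t => phi b (x.1 - t)) (fun t => phi b (x.2 - t))
    _ = (∫ t : ℝ, phi b t) ^ 2 := by
        rw [integral_sub_left_eq_self (phi b) volume x.1,
          integral_sub_left_eq_self (phi b) volume x.2]
        ring

lemma Gd_swap (b : ℝ) (x y : ℝ × ℝ) : Gd b (y, x) = Gd b (x, y) := by
  unfold Gd
  rw [show y.1 - x.1 = -(x.1 - y.1) by ring, show y.2 - x.2 = -(x.2 - y.2) by ring,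
    phi_even, phi_even]

lemma integrableOn_Gd_left {b : ℝ} (hb : 0 < b) {s : Set (ℝ × ℝ)}
    (hs : MeasurableSet s) (hfin : volume s < ⊤) :
    IntegrableOn (Gd b) (s ×ˢ (univ : Set (ℝ × ℝ))) := by
  rw [IntegrableOn, Measure.volume_eq_prod, ← Measure.restrict_prod_eq_prod_univ]
  rw [integrable_prod_iff ((measurable_Gd b).aestronglyMeasurable)]
  constructor
  · exact Eventually.of_forall fun x => integrable_Gd_section_left hb x
  · have hconst : ∀ x : ℝ × ℝ, (∫ y : ℝ × ℝ, ‖Gd b (x, y)‖) = (∫ t : ℝ, phi b t) ^ 2 := by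
      intro x
      rw [← integral_Gd_section_left (b := b) x]
      congr 1
      funext y
      rw [Real.norm_eq_abs, abs_of_nonneg (Gd_nonneg b _)]
    have : (fun x : ℝ × ℝ => ∫ y : ℝ × ℝ, ‖Gd b (x, y)‖)
        = fun _ => (∫ t : ℝ, phi b t) ^ 2 := funext hconst
    rw [this]
    exact integrableOn_const hfin.ne enorm_ne_top

lemma integrableOn_Gd_right {b : ℝ} (hb : 0 < b) {s : Set (ℝ × ℝ)}
    (hs : MeasurableSet s) (hfin : volume s < ⊤) :
    IntegrableOn (Gd b) ((univ : Set (ℝ × ℝ)) ×ˢ s) := by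
  have hswap : IntegrableOn (Gd b) (s ×ˢ (univ : Set (ℝ × ℝ))) :=
    integrableOn_Gd_left hb hs hfin
  have hmp : MeasurePreserving (Prod.swap : (ℝ × ℝ) × (ℝ × ℝ) → (ℝ × ℝ) × (ℝ × ℝ))
      volume volume := by
    constructor
    · exact measurable_swap
    · rw [Measure.volume_eq_prod, Measure.prod_swap, ← Measure.volume_eq_prod]
  have := (MeasurePreserving.integrableOn_comp_preimage hmp
    (MeasurableEquiv.prodComm (α := ℝ × ℝ) (β := ℝ × ℝ)).measurableEmbedding).2 hswap
  have hpre : (Prod.swap : (ℝ × ℝ) × (ℝ × ℝ) → (ℝ × ℝ) × (ℝ × ℝ)) ⁻¹' (s ×ˢ univ)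
      = (univ : Set (ℝ × ℝ)) ×ˢ s := by
    ext q; simp [Set.mem_prod]
  rw [hpre] at this
  apply this.congr_fun _ (MeasurableSet.univ.prod hs)
  intro q _
  exact (Gd_swap b q.2 q.1).symm

/-! ### The disorder shift and invariance of the product measure -/

lemma measurable_disorderShift (γ : ℤ × ℤ) : Measurable (disorderShift γ) :=
  measurable_pi_lambda _ fun γ' => measurable_pi_apply (γ' + γ)

/-- The shift as a measurable equivalence. -/
def shiftEquiv (γ : ℤ × ℤ) : DisorderSpace ≃ᵐ DisorderSpace where
  toEquiv :=
  { toFun := disorderShift γ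
    invFun := disorderShift (-γ)
    left_inv := fun ω => funext fun γ' => by simp [disorderShift]
    right_inv := fun ω => funext fun γ' => by simp [disorderShift] }
  measurable_toFun := measurable_disorderShift γ
  measurable_invFun := measurable_disorderShift (-γ)

lemma measurableSet_box (s : Finset (ℤ × ℤ)) (A : (ℤ × ℤ) → Set (Set.Icc (-1 : ℝ) 1))
    (hA : ∀ i ∈ s, MeasurableSet (A i)) :
    MeasurableSet {ω : DisorderSpace | ∀ i ∈ s, ω i ∈ A i} := by
  have : {ω : DisorderSpace | ∀ i ∈ s, ω i ∈ A i}
      = ⋂ i ∈ s, (fun ω : DisorderSpace => ω i) ⁻¹' (A i) := by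
    ext ω; simp
  rw [this]
  exact MeasurableSet.biInter s.countable_toSet
    fun i hi => measurable_pi_apply i (hA i hi)

/-- Cylinder boxes. -/
def boxes : Set (Set DisorderSpace) :=
  {S | ∃ (s : Finset (ℤ × ℤ)) (A : (ℤ × ℤ) → Set (Set.Icc (-1 : ℝ) 1)),
    (∀ i ∈ s, MeasurableSet (A i)) ∧ S = {ω | ∀ i ∈ s, ω i ∈ A i}}

lemma isPiSystem_boxes : IsPiSystem boxes := by
  rintro S ⟨s, A, hA, rfl⟩ T ⟨t, Bf, hB, rfl⟩ -
  refine ⟨s ∪ t, fun i => (if i ∈ s then A i else univ) ∩ (if i ∈ t then Bf i else univ),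
    ?_, ?_⟩
  · intro i _
    apply MeasurableSet.inter <;> split_ifs with h
    · exact hA i h
    · exact MeasurableSet.univ
    · exact hB i h
    · exact MeasurableSet.univ
  · ext ω
    simp only [mem_inter_iff, mem_setOf_eq, Finset.mem_union]
    constructor
    · rintro ⟨h1, h2⟩ i hi
      constructor
      · split_ifs with h
        · exact h1 i h
        · trivial
      · split_ifs with h
        · exact h2 i h
        · trivial
    · intro h
      constructor
      · intro i hi
        have := (h i (Or.inl hi)).1
        rwa [if_pos hi] at this
      · intro i hi
        have := (h i (Or.inr hi)).2
        rwa [if_pos hi] at this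

lemma generateFrom_boxes :
    (MeasurableSpace.pi : MeasurableSpace DisorderSpace)
      = MeasurableSpace.generateFrom boxes := by
  apply le_antisymm
  · rw [MeasurableSpace.pi]
    apply iSup_le
    intro i
    intro S hS
    obtain ⟨t, ht, rfl⟩ := hS
    apply MeasurableSpace.measurableSet_generateFrom
    refine ⟨{i}, fun _ => t, fun _ _ => ht, ?_⟩
    ext ω; simp
  · apply MeasurableSpace.generateFrom_le
    rintro S ⟨s, A, hA, rfl⟩
    exact measurableSet_box s A hA

lemma map_shift_eq (μ0 : Measure (Set.Icc (-1 : ℝ) 1)) [IsProbabilityMeasure μ0]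
    (P : Measure DisorderSpace) [IsProbabilityMeasure P]
    (hP : ∀ (s : Finset (ℤ × ℤ)) (A : (ℤ × ℤ) → Set (Set.Icc (-1 : ℝ) 1)),
      (∀ i ∈ s, MeasurableSet (A i)) →
        P {ω | ∀ i ∈ s, ω i ∈ A i} = ∏ i ∈ s, μ0 (A i)) (γ : ℤ × ℤ) :
    Measure.map (disorderShift γ) P = P := by
  have hmeas := measurable_disorderShift γ
  have : IsProbabilityMeasure (Measure.map (disorderShift γ) P) :=
    Measure.isProbabilityMeasure_map hmeas.aemeasurable
  apply MeasureTheory.ext_of_generate_finite boxes generateFrom_boxes isPiSystem_boxes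
  · rintro S ⟨s, A, hA, rfl⟩
    rw [Measure.map_apply hmeas (measurableSet_box s A hA)]
    have hpre : disorderShift γ ⁻¹' {ω | ∀ i ∈ s, ω i ∈ A i}
        = {ω : DisorderSpace | ∀ j ∈ s.image (· + γ), ω j ∈ A (j - γ)} := by
      ext ω
      simp only [mem_preimage, mem_setOf_eq]
      constructor
      · intro h j hj
        obtain ⟨i, hi, rfl⟩ := Finset.mem_image.1 hj
        simpa [disorderShift, add_sub_cancel_right] using h i hi
      · intro h i hi
        have := h (i + γ) (Finset.mem_image_of_mem _ hi)
        simpa [disorderShift, add_sub_cancel_right] using this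
    rw [hpre, hP (s.image (· + γ)) (fun j => A (j - γ))
      (by
        intro j hj
        obtain ⟨i, hi, rfl⟩ := Finset.mem_image.1 hj
        simpa [add_sub_cancel_right] using hA i hi)]
    rw [Finset.prod_image (by intro a _ b _ h; exact add_left_injective γ h)]
    rw [hP s A hA]
    apply Finset.prod_congr rfl
    intro i _
    simp [add_sub_cancel_right]
  · simp [Measure.map_apply hmeas MeasurableSet.univ]

/-! ### Tiling of the plane -/

/-- The fundamental half-open unit square. -/
def Qo : Set (ℝ × ℝ) := Ico (0:ℝ) 1 ×ˢ Ico (0:ℝ) 1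

/-- Translate of the fundamental square by `γ`. -/
def Tile (γ : ℤ × ℤ) : Set (ℝ × ℝ) := {y | y - latR2 γ ∈ Qo}

lemma measurableSet_Qo : MeasurableSet Qo :=
  (measurableSet_Ico).prod measurableSet_Ico

lemma measurableSet_Tile (γ : ℤ × ℤ) : MeasurableSet (Tile γ) :=
  (measurable_sub_const (latR2 γ)) measurableSet_Qo

lemma mem_Tile_iff {γ : ℤ × ℤ} {y : ℝ × ℝ} :
    y ∈ Tile γ ↔ (⌊y.1⌋ = γ.1 ∧ ⌊y.2⌋ = γ.2) := by
  constructor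
  · rintro ⟨h1, h2⟩
    simp only [latR2, Prod.fst_sub, Prod.snd_sub, mem_Ico] at h1 h2
    constructor
    · rw [Int.floor_eq_iff]
      constructor <;> [linarith [h1.1]; linarith [h1.2]]
    · rw [Int.floor_eq_iff]
      constructor <;> [linarith [h2.1]; linarith [h2.2]]
  · rintro ⟨h1, h2⟩
    have e1 := Int.fract_nonneg y.1
    have e2 := Int.fract_lt_one y.1
    have e3 := Int.fract_nonneg y.2
    have e4 := Int.fract_lt_one y.2
    rw [Int.fract] at e1 e2 e3 e4
    constructor <;> simp only [latR2, Prod.fst_sub, Prod.snd_sub, mem_Ico]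
    · rw [h1] at e1 e2
      exact ⟨by linarith, by linarith⟩
    · rw [h2] at e3 e4
      exact ⟨by linarith, by linarith⟩

lemma iUnion_Tile : (⋃ γ : ℤ × ℤ, Tile γ) = univ := by
  ext y
  simp only [mem_iUnion, mem_univ, iff_true]
  exact ⟨(⌊y.1⌋, ⌊y.2⌋), mem_Tile_iff.2 ⟨rfl, rfl⟩⟩

lemma pairwise_disjoint_Tile : Pairwise (Function.onFun Disjoint Tile) := by
  intro γ γ' hne
  rw [Function.onFun, Set.disjoint_left]
  intro y hy hy'
  rw [mem_Tile_iff] at hy hy'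
  apply hne
  ext
  · rw [← hy.1, ← hy'.1]
  · rw [← hy.2, ← hy'.2]

lemma Tile_neg_eq (γ : ℤ × ℤ) : Tile (-γ) = {x : ℝ × ℝ | x + latR2 γ ∈ Qo} := by
  ext x
  have : latR2 (-γ) = -latR2 γ := by
    simp [latR2, Prod.ext_iff]
  simp only [Tile, mem_setOf_eq, this, sub_neg_eq_add]

/-! ### Null sets -/

lemma null_line_fst (c : ℝ) : (volume : Measure (ℝ × ℝ)) {y : ℝ × ℝ | y.1 = c} = 0 := by
  have h : {y : ℝ × ℝ | y.1 = c} = ({c} : Set ℝ) ×ˢ (univ : Set ℝ) := by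
    ext y
    simp only [mem_setOf_eq, Set.mem_prod, mem_singleton_iff, mem_univ, and_true]
  rw [h, Measure.volume_eq_prod, Measure.prod_prod]
  simp

lemma null_line_snd (c : ℝ) : (volume : Measure (ℝ × ℝ)) {y : ℝ × ℝ | y.2 = c} = 0 := by
  have h : {y : ℝ × ℝ | y.2 = c} = (univ : Set ℝ) ×ˢ ({c} : Set ℝ) := by
    ext y
    simp only [mem_setOf_eq, Set.mem_prod, mem_singleton_iff, mem_univ, true_and]
  rw [h, Measure.volume_eq_prod, Measure.prod_prod]
  simp

lemma ae_offdiag :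
    ∀ᵐ q : (ℝ × ℝ) × (ℝ × ℝ) ∂(volume), q.1.1 ≠ q.2.1 ∧ q.1.2 ≠ q.2.2 := by
  have hm1 : MeasurableSet {q : (ℝ × ℝ) × (ℝ × ℝ) | q.1.1 = q.2.1} :=
    measurableSet_eq_fun (measurable_fst.fst) (measurable_snd.fst)
  have hm2 : MeasurableSet {q : (ℝ × ℝ) × (ℝ × ℝ) | q.1.2 = q.2.2} :=
    measurableSet_eq_fun (measurable_fst.snd) (measurable_snd.snd)
  have h1 : (volume : Measure ((ℝ × ℝ) × (ℝ × ℝ))) {q | q.1.1 = q.2.1} = 0 := by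
    rw [Measure.volume_eq_prod, Measure.prod_apply hm1]
    have : ∀ x : ℝ × ℝ,
        (volume : Measure (ℝ × ℝ)) (Prod.mk x ⁻¹' {q : (ℝ × ℝ) × (ℝ × ℝ) | q.1.1 = q.2.1}) = 0 := by
      intro x
      have hpre : Prod.mk x ⁻¹' {q : (ℝ × ℝ) × (ℝ × ℝ) | q.1.1 = q.2.1}
          = {y : ℝ × ℝ | y.1 = x.1} := by
        ext y; simp [eq_comm]
      rw [hpre]
      exact null_line_fst x.1
    simp only [this]
    simp
  have h2 : (volume : Measure ((ℝ × ℝ) × (ℝ × ℝ))) {q | q.1.2 = q.2.2} = 0 := by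
    rw [Measure.volume_eq_prod, Measure.prod_apply hm2]
    have : ∀ x : ℝ × ℝ,
        (volume : Measure (ℝ × ℝ)) (Prod.mk x ⁻¹' {q : (ℝ × ℝ) × (ℝ × ℝ) | q.1.2 = q.2.2}) = 0 := by
      intro x
      have hpre : Prod.mk x ⁻¹' {q : (ℝ × ℝ) × (ℝ × ℝ) | q.1.2 = q.2.2}
          = {y : ℝ × ℝ | y.2 = x.2} := by
        ext y; simp [eq_comm]
      rw [hpre]
      exact null_line_snd x.2
    simp only [this]
    simp
  rw [ae_iff]
  apply measure_mono_null _ (measure_union_null h1 h2)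
  intro q hq
  simp only [mem_setOf_eq, not_and_or, not_not, ne_eq] at hq
  rcases hq with h | h
  · exact Or.inl h
  · exact Or.inr h

lemma null_Qc_diff_Qo :
    (volume : Measure (ℝ × ℝ)) ((Icc (0:ℝ) 1 ×ˢ Icc (0:ℝ) 1) \ Qo) = 0 := by
  have hsub : (Icc (0:ℝ) 1 ×ˢ Icc (0:ℝ) 1) \ Qo
      ⊆ {z : ℝ × ℝ | z.1 = 1} ∪ {z : ℝ × ℝ | z.2 = 1} := by
    rintro z ⟨⟨hz1, hz2⟩, hno⟩
    simp only [mem_Icc] at hz1 hz2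
    by_contra hcon
    rw [mem_union] at hcon
    push_neg at hcon
    obtain ⟨ne1, ne2⟩ := hcon
    simp only [mem_setOf_eq] at ne1 ne2
    exact hno ⟨⟨hz1.1, lt_of_le_of_ne hz1.2 ne1⟩, ⟨hz2.1, lt_of_le_of_ne hz2.2 ne2⟩⟩
  exact measure_mono_null hsub
    (measure_union_null (null_line_fst 1) (null_line_snd 1))

/-! ### Auxiliary integrability on products with a probability space -/

lemma integrable_snd_comp {α β : Type*} [MeasurableSpace α] [MeasurableSpace β]
    {μ : Measure α} [IsProbabilityMeasure μ] {ν : Measure β} [SFinite ν]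
    {h : β → ℝ} (hh : Integrable h ν) :
    Integrable (fun p : α × β => h p.2) (μ.prod ν) := by
  have hsm : AEStronglyMeasurable (fun p : α × β => h p.2) (μ.prod ν) :=
    hh.aestronglyMeasurable.comp_quasiMeasurePreserving Measure.quasiMeasurePreserving_snd
  rw [integrable_prod_iff hsm]
  constructor
  · exact Eventually.of_forall fun _ => hh
  · have hconst : Integrable (fun _ : α => ∫ y, ‖h y‖ ∂ν) μ := integrable_const _
    exact hconst

end TraceCyc

open TraceCyc

instance : (volume : Measure ((ℝ × ℝ) × (ℝ × ℝ))).IsAddRightInvariant := by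
  rw [Measure.volume_eq_prod]; infer_instance

/-- **Generalized trace cyclicity, bulk version.**
For `ℤ²`-covariant kernel families on `ℝ²` with logarithmic/inverse-distance singularities
on the diagonal and exponential off-diagonal decay, the disorder expectation of the
trace-per-unit-cell of the product is symmetric in the two factors:
`𝔼 ∫_Ω dx ∫_{ℝ²} dy A_ω(x,y) B_ω(y,x) = 𝔼 ∫_Ω dx ∫_{ℝ²} dy B_ω(x,y) A_ω(y,x)`,
all integrals being absolutely convergent. -/
theorem generalized_trace_cyclicity_bulk
    (μ0 : Measure (Set.Icc (-1 : ℝ) 1)) [IsProbabilityMeasure μ0]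
    (P : Measure DisorderSpace) [IsProbabilityMeasure P]
    -- `P` is the product measure `⊗_{ℤ²} μ0`, characterized by its cylinder probabilities:
    (hP : ∀ (s : Finset (ℤ × ℤ)) (A : (ℤ × ℤ) → Set (Set.Icc (-1 : ℝ) 1)),
      (∀ i ∈ s, MeasurableSet (A i)) →
        P {ω | ∀ i ∈ s, ω i ∈ A i} = ∏ i ∈ s, μ0 (A i))
    (A B : DisorderSpace → (ℝ × ℝ) → (ℝ × ℝ) → ℂ)
    (hAmeas : Measurable (fun p : DisorderSpace × (ℝ × ℝ) × (ℝ × ℝ) => A p.1 p.2.1 p.2.2))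
    (hBmeas : Measurable (fun p : DisorderSpace × (ℝ × ℝ) × (ℝ × ℝ) => B p.1 p.2.1 p.2.2))
    (hAcont : ∀ ω, ContinuousOn (fun p : (ℝ × ℝ) × (ℝ × ℝ) => A ω p.1 p.2)
      {p : (ℝ × ℝ) × (ℝ × ℝ) | p.1 ≠ p.2})
    (hBcont : ∀ ω, ContinuousOn (fun p : (ℝ × ℝ) × (ℝ × ℝ) => B ω p.1 p.2)
      {p : (ℝ × ℝ) × (ℝ × ℝ) | p.1 ≠ p.2})
    (C δ : ℝ) (hC : 0 < C) (hδ : 0 < δ)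
    (hAbound : ∀ ω, ∀ x y : ℝ × ℝ, x ≠ y →
      ‖A ω x y‖ ≤ C * (1 + |Real.log (eNorm2 (x - y))|) * Real.exp (-δ * eNorm2 (x - y)))
    (hBbound : ∀ ω, ∀ x y : ℝ × ℝ, x ≠ y →
      ‖B ω x y‖ ≤ C * (1 + (eNorm2 (x - y))⁻¹) * Real.exp (-δ * eNorm2 (x - y)))
    -- covariance of the product under all lattice shifts:
    (hcov : ∀ γ : ℤ × ℤ, ∀ ω, ∀ x y : ℝ × ℝ,
      A ω (x - latR2 γ) (y - latR2 γ) * B ω (y - latR2 γ) (x - latR2 γ)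
        = A (disorderShift γ ω) x y * B (disorderShift γ ω) y x) :
    (∀ ω, IntegrableOn (fun q : (ℝ × ℝ) × (ℝ × ℝ) => A ω q.1 q.2 * B ω q.2 q.1)
        ((Set.Icc (0:ℝ) 1 ×ˢ Set.Icc (0:ℝ) 1) ×ˢ (Set.univ : Set (ℝ × ℝ)))) ∧
    (∀ ω, IntegrableOn (fun q : (ℝ × ℝ) × (ℝ × ℝ) => B ω q.1 q.2 * A ω q.2 q.1)
        ((Set.Icc (0:ℝ) 1 ×ˢ Set.Icc (0:ℝ) 1) ×ˢ (Set.univ : Set (ℝ × ℝ)))) ∧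
    (∫ ω, (∫ x in (Set.Icc (0:ℝ) 1 ×ˢ Set.Icc (0:ℝ) 1),
        ∫ y : ℝ × ℝ, A ω x y * B ω y x) ∂P)
      = ∫ ω, (∫ x in (Set.Icc (0:ℝ) 1 ×ˢ Set.Icc (0:ℝ) 1),
        ∫ y : ℝ × ℝ, B ω x y * A ω y x) ∂P := by
  classical
  have hb : (0:ℝ) < δ/2 := half_pos hδ
  set c₀ : ℝ := C^2 * (1 + 1/δ) with hc₀def
  have hc₀nn : (0:ℝ) ≤ c₀ := by positivity
  set Qc : Set (ℝ × ℝ) := Icc (0:ℝ) 1 ×ˢ Icc (0:ℝ) 1 with hQcdef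
  have hQcmeas : MeasurableSet Qc := measurableSet_Icc.prod measurableSet_Icc
  have hQcfin : volume Qc < ⊤ := (isCompact_Icc.prod isCompact_Icc).measure_lt_top
  have hQoQc : Qo ⊆ Qc :=
    Set.prod_mono Ico_subset_Icc_self Ico_subset_Icc_self
  have hQofin : volume Qo < ⊤ := lt_of_le_of_lt (measure_mono hQoQc) hQcfin
  -- pointwise dominations
  have hdomAB : ∀ ω, ∀ q : (ℝ × ℝ) × (ℝ × ℝ), q.1.1 ≠ q.2.1 → q.1.2 ≠ q.2.2 →
      ‖A ω q.1 q.2 * B ω q.2 q.1‖ ≤ c₀ * Gd (δ/2) q := by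
    intro ω q h1 h2
    have hxy : q.1 ≠ q.2 := fun h => h1 (by rw [h])
    have hyx : q.2 ≠ q.1 := Ne.symm hxy
    have hA := hAbound ω q.1 q.2 hxy
    have hB := hBbound ω q.2 q.1 hyx
    have hnegs : eNorm2 (q.2 - q.1) = eNorm2 (q.1 - q.2) := by
      rw [show q.2 - q.1 = -(q.1 - q.2) by ring, eNorm2_neg]
    rw [hnegs] at hB
    have hz1 : (q.1 - q.2).1 ≠ 0 := by
      simp only [Prod.fst_sub]
      exact sub_ne_zero.2 h1
    have hz2 : (q.1 - q.2).2 ≠ 0 := by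
      simp only [Prod.snd_sub]
      exact sub_ne_zero.2 h2
    have hkey := key_dom hC.le hδ (q.1 - q.2) hz1 hz2
    calc ‖A ω q.1 q.2 * B ω q.2 q.1‖ = ‖A ω q.1 q.2‖ * ‖B ω q.2 q.1‖ := norm_mul _ _
      _ ≤ (C * (1 + |Real.log (eNorm2 (q.1 - q.2))|) * Real.exp (-δ * eNorm2 (q.1 - q.2)))
          * (C * (1 + (eNorm2 (q.1 - q.2))⁻¹) * Real.exp (-δ * eNorm2 (q.1 - q.2))) := by
          apply mul_le_mul hA hB (norm_nonneg _)
          apply mul_nonneg (mul_nonneg hC.le (by positivity)) (Real.exp_pos _).le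
      _ ≤ (C^2 * (1 + 1/δ)) * (phi (δ/2) (q.1 - q.2).1 * phi (δ/2) (q.1 - q.2).2) := hkey
      _ = c₀ * Gd (δ/2) q := by
          rw [hc₀def]
          simp only [Gd, Prod.fst_sub, Prod.snd_sub]
  have hdomBA : ∀ ω, ∀ q : (ℝ × ℝ) × (ℝ × ℝ), q.1.1 ≠ q.2.1 → q.1.2 ≠ q.2.2 →
      ‖B ω q.1 q.2 * A ω q.2 q.1‖ ≤ c₀ * Gd (δ/2) q := by
    intro ω q h1 h2
    have hxy : q.1 ≠ q.2 := fun h => h1 (by rw [h])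
    have hyx : q.2 ≠ q.1 := Ne.symm hxy
    have hB := hBbound ω q.1 q.2 hxy
    have hA := hAbound ω q.2 q.1 hyx
    have hnegs : eNorm2 (q.2 - q.1) = eNorm2 (q.1 - q.2) := by
      rw [show q.2 - q.1 = -(q.1 - q.2) by ring, eNorm2_neg]
    rw [hnegs] at hA
    have hz1 : (q.1 - q.2).1 ≠ 0 := by
      simp only [Prod.fst_sub]
      exact sub_ne_zero.2 h1
    have hz2 : (q.1 - q.2).2 ≠ 0 := by
      simp only [Prod.snd_sub]
      exact sub_ne_zero.2 h2
    have hkey := key_dom hC.le hδ (q.1 - q.2) hz1 hz2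
    calc ‖B ω q.1 q.2 * A ω q.2 q.1‖ = ‖B ω q.1 q.2‖ * ‖A ω q.2 q.1‖ := norm_mul _ _
      _ ≤ (C * (1 + (eNorm2 (q.1 - q.2))⁻¹) * Real.exp (-δ * eNorm2 (q.1 - q.2)))
          * (C * (1 + |Real.log (eNorm2 (q.1 - q.2))|) * Real.exp (-δ * eNorm2 (q.1 - q.2))) := by
          apply mul_le_mul hB hA (norm_nonneg _)
          have h0 : (0:ℝ) ≤ (eNorm2 (q.1 - q.2))⁻¹ := inv_nonneg.2 (eNorm2_nonneg _)
          apply mul_nonneg (mul_nonneg hC.le (by linarith)) (Real.exp_pos _).le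
      _ = (C * (1 + |Real.log (eNorm2 (q.1 - q.2))|) * Real.exp (-δ * eNorm2 (q.1 - q.2)))
          * (C * (1 + (eNorm2 (q.1 - q.2))⁻¹) * Real.exp (-δ * eNorm2 (q.1 - q.2))) := by ring
      _ ≤ (C^2 * (1 + 1/δ)) * (phi (δ/2) (q.1 - q.2).1 * phi (δ/2) (q.1 - q.2).2) := hkey
      _ = c₀ * Gd (δ/2) q := by
          rw [hc₀def]
          simp only [Gd, Prod.fst_sub, Prod.snd_sub]
  -- measurability of kernels in (x, y) for fixed ω
  have hABm : ∀ ω, Measurable (fun q : (ℝ × ℝ) × (ℝ × ℝ) => A ω q.1 q.2 * B ω q.2 q.1) := by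
    intro ω
    exact (hAmeas.comp (measurable_const.prodMk measurable_id)).mul
      (hBmeas.comp (measurable_const.prodMk (measurable_snd.prodMk measurable_fst)))
  have hBAm : ∀ ω, Measurable (fun q : (ℝ × ℝ) × (ℝ × ℝ) => B ω q.1 q.2 * A ω q.2 q.1) := by
    intro ω
    exact (hBmeas.comp (measurable_const.prodMk measurable_id)).mul
      (hAmeas.comp (measurable_const.prodMk (measurable_snd.prodMk measurable_fst)))
  -- Part 1 and Part 2:
  have part1 : ∀ ω, IntegrableOn (fun q : (ℝ × ℝ) × (ℝ × ℝ) => A ω q.1 q.2 * B ω q.2 q.1)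
      (Qc ×ˢ (Set.univ : Set (ℝ × ℝ))) := by
    intro ω
    have hGi : IntegrableOn (fun q => c₀ * Gd (δ/2) q) (Qc ×ˢ (univ : Set (ℝ × ℝ))) :=
      (integrableOn_Gd_left hb hQcmeas hQcfin).const_mul c₀
    apply Integrable.mono' hGi ((hABm ω).aestronglyMeasurable)
    filter_upwards [ae_restrict_of_ae ae_offdiag] with q hq
    exact hdomAB ω q hq.1 hq.2
  have part2 : ∀ ω, IntegrableOn (fun q : (ℝ × ℝ) × (ℝ × ℝ) => B ω q.1 q.2 * A ω q.2 q.1)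
      (Qc ×ˢ (Set.univ : Set (ℝ × ℝ))) := by
    intro ω
    have hGi : IntegrableOn (fun q => c₀ * Gd (δ/2) q) (Qc ×ˢ (univ : Set (ℝ × ℝ))) :=
      (integrableOn_Gd_left hb hQcmeas hQcfin).const_mul c₀
    apply Integrable.mono' hGi ((hBAm ω).aestronglyMeasurable)
    filter_upwards [ae_restrict_of_ae ae_offdiag] with q hq
    exact hdomBA ω q hq.1 hq.2
  refine ⟨part1, part2, ?_⟩
  -- the global integrands
  set F : DisorderSpace × ((ℝ × ℝ) × (ℝ × ℝ)) → ℂ :=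
    fun p => A p.1 p.2.1 p.2.2 * B p.1 p.2.2 p.2.1 with hFdef
  set G : DisorderSpace × ((ℝ × ℝ) × (ℝ × ℝ)) → ℂ :=
    fun p => B p.1 p.2.1 p.2.2 * A p.1 p.2.2 p.2.1 with hGdef
  have hFm : Measurable F :=
    hAmeas.mul (hBmeas.comp (measurable_fst.prodMk
      (measurable_snd.snd.prodMk measurable_snd.fst)))
  have hGm : Measurable G :=
    hBmeas.mul (hAmeas.comp (measurable_fst.prodMk
      (measurable_snd.snd.prodMk measurable_snd.fst)))
  -- integrability over P ⊗ (restricted volume)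
  have hIntF : ∀ S : Set ((ℝ × ℝ) × (ℝ × ℝ)), IntegrableOn (Gd (δ/2)) S volume →
      Integrable F (P.prod ((volume : Measure ((ℝ × ℝ) × (ℝ × ℝ))).restrict S)) := by
    intro S hGS
    apply Integrable.mono' (integrable_snd_comp (hGS.const_mul c₀))
      (hFm.aestronglyMeasurable)
    have hae2 : ∀ᵐ q ∂((volume : Measure ((ℝ × ℝ) × (ℝ × ℝ))).restrict S),
        q.1.1 ≠ q.2.1 ∧ q.1.2 ≠ q.2.2 := ae_restrict_of_ae ae_offdiag
    filter_upwards [Measure.quasiMeasurePreserving_snd.ae hae2] with p hp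
    exact hdomAB p.1 p.2 hp.1 hp.2
  have hIntG : ∀ S : Set ((ℝ × ℝ) × (ℝ × ℝ)), IntegrableOn (Gd (δ/2)) S volume →
      Integrable G (P.prod ((volume : Measure ((ℝ × ℝ) × (ℝ × ℝ))).restrict S)) := by
    intro S hGS
    apply Integrable.mono' (integrable_snd_comp (hGS.const_mul c₀))
      (hGm.aestronglyMeasurable)
    have hae2 : ∀ᵐ q ∂((volume : Measure ((ℝ × ℝ) × (ℝ × ℝ))).restrict S),
        q.1.1 ≠ q.2.1 ∧ q.1.2 ≠ q.2.2 := ae_restrict_of_ae ae_offdiag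
    filter_upwards [Measure.quasiMeasurePreserving_snd.ae hae2] with p hp
    exact hdomBA p.1 p.2 hp.1 hp.2
  -- the product measure and its restriction
  set ρ : Measure (DisorderSpace × ((ℝ × ℝ) × (ℝ × ℝ))) :=
    P.prod (volume : Measure ((ℝ × ℝ) × (ℝ × ℝ))) with hρdef
  have hM : ∀ S : Set ((ℝ × ℝ) × (ℝ × ℝ)),
      P.prod ((volume : Measure ((ℝ × ℝ) × (ℝ × ℝ))).restrict S)
        = ρ.restrict ((univ : Set DisorderSpace) ×ˢ S) := by
    intro S
    rw [hρdef]
    conv_rhs => rw [← Measure.prod_restrict]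
    rw [Measure.restrict_univ]
  -- conversion of iterated integrals to integrals over the product measure
  have stepA : ∀ ω, (∫ x in Qc, ∫ y : ℝ × ℝ, A ω x y * B ω y x)
      = ∫ q in Qc ×ˢ (univ : Set (ℝ × ℝ)), A ω q.1 q.2 * B ω q.2 q.1 ∂(volume) := by
    intro ω
    have hint : IntegrableOn (fun q : (ℝ × ℝ) × (ℝ × ℝ) => A ω q.1 q.2 * B ω q.2 q.1)
        (Qc ×ˢ (univ : Set (ℝ × ℝ)))
        ((volume : Measure (ℝ × ℝ)).prod (volume : Measure (ℝ × ℝ))) := by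
      rw [← Measure.volume_eq_prod]
      exact part1 ω
    symm
    rw [Measure.volume_eq_prod (ℝ × ℝ) (ℝ × ℝ), setIntegral_prod _ hint,
      Measure.restrict_univ]
  have stepA' : ∀ ω, (∫ x in Qc, ∫ y : ℝ × ℝ, B ω x y * A ω y x)
      = ∫ q in Qc ×ˢ (univ : Set (ℝ × ℝ)), B ω q.1 q.2 * A ω q.2 q.1 ∂(volume) := by
    intro ω
    have hint : IntegrableOn (fun q : (ℝ × ℝ) × (ℝ × ℝ) => B ω q.1 q.2 * A ω q.2 q.1)
        (Qc ×ˢ (univ : Set (ℝ × ℝ)))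
        ((volume : Measure (ℝ × ℝ)).prod (volume : Measure (ℝ × ℝ))) := by
      rw [← Measure.volume_eq_prod]
      exact part2 ω
    symm
    rw [Measure.volume_eq_prod (ℝ × ℝ) (ℝ × ℝ), setIntegral_prod _ hint,
      Measure.restrict_univ]
  have hGdQc : IntegrableOn (Gd (δ/2)) (Qc ×ˢ (univ : Set (ℝ × ℝ))) volume :=
    integrableOn_Gd_left hb hQcmeas hQcfin
  have hGdQo : IntegrableOn (Gd (δ/2)) (Qo ×ˢ (univ : Set (ℝ × ℝ))) volume :=
    integrableOn_Gd_left hb measurableSet_Qo hQofin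
  have hGdQc' : IntegrableOn (Gd (δ/2)) ((univ : Set (ℝ × ℝ)) ×ˢ Qc) volume :=
    integrableOn_Gd_right hb hQcmeas hQcfin
  have hGdQo' : IntegrableOn (Gd (δ/2)) ((univ : Set (ℝ × ℝ)) ×ˢ Qo) volume :=
    integrableOn_Gd_right hb measurableSet_Qo hQofin
  -- LHS and RHS as product-measure integrals
  have hLHS : (∫ ω, (∫ x in Qc, ∫ y : ℝ × ℝ, A ω x y * B ω y x) ∂P)
      = ∫ p in (univ : Set DisorderSpace) ×ˢ (Qc ×ˢ (univ : Set (ℝ × ℝ))), F p ∂ρ := by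
    rw [← hM]
    rw [integral_prod F (hIntF _ hGdQc)]
    apply integral_congr_ae
    apply Eventually.of_forall
    intro ω
    exact stepA ω
  have hRHS : (∫ ω, (∫ x in Qc, ∫ y : ℝ × ℝ, B ω x y * A ω y x) ∂P)
      = ∫ p in (univ : Set DisorderSpace) ×ˢ (Qc ×ˢ (univ : Set (ℝ × ℝ))), G p ∂ρ := by
    rw [← hM]
    rw [integral_prod G (hIntG _ hGdQc)]
    apply integral_congr_ae
    apply Eventually.of_forall
    intro ω
    exact stepA' ω
  rw [hLHS, hRHS]
  -- a.e. equality of sets Qc vs Qo at the level of ρ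
  have hnullprod : ∀ W : Set (ℝ × ℝ), volume W = 0 →
      ρ ((univ : Set DisorderSpace) ×ˢ (W ×ˢ (univ : Set (ℝ × ℝ)))) = 0 := by
    intro W hW
    rw [hρdef, Measure.prod_prod]
    have : (volume : Measure ((ℝ × ℝ) × (ℝ × ℝ))) (W ×ˢ (univ : Set (ℝ × ℝ))) = 0 := by
      rw [Measure.volume_eq_prod, Measure.prod_prod, hW, zero_mul]
    rw [this, mul_zero]
  have hnullprod' : ∀ W : Set (ℝ × ℝ), volume W = 0 →
      ρ ((univ : Set DisorderSpace) ×ˢ ((univ : Set (ℝ × ℝ)) ×ˢ W)) = 0 := by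
    intro W hW
    rw [hρdef, Measure.prod_prod]
    have : (volume : Measure ((ℝ × ℝ) × (ℝ × ℝ))) ((univ : Set (ℝ × ℝ)) ×ˢ W) = 0 := by
      rw [Measure.volume_eq_prod, Measure.prod_prod, hW, mul_zero]
    rw [this, mul_zero]
  have hsetae1 : ((univ : Set DisorderSpace) ×ˢ (Qc ×ˢ (univ : Set (ℝ × ℝ))))
      =ᵐ[ρ] ((univ : Set DisorderSpace) ×ˢ (Qo ×ˢ (univ : Set (ℝ × ℝ)))) := by
    rw [MeasureTheory.ae_eq_set]
    constructor
    · apply measure_mono_null _ (hnullprod (Qc \ Qo) null_Qc_diff_Qo)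
      rintro p ⟨hp, hn⟩
      exact ⟨trivial, ⟨hp.2.1, fun hxo => hn ⟨trivial, hxo, trivial⟩⟩, trivial⟩
    · have hsub : ((univ : Set DisorderSpace) ×ˢ (Qo ×ˢ (univ : Set (ℝ × ℝ))))
          ⊆ ((univ : Set DisorderSpace) ×ˢ (Qc ×ˢ (univ : Set (ℝ × ℝ)))) :=
        Set.prod_mono Subset.rfl (Set.prod_mono hQoQc Subset.rfl)
      rw [diff_eq_empty.2 hsub]
      exact measure_empty
  have hsetae2 : ((univ : Set DisorderSpace) ×ˢ ((univ : Set (ℝ × ℝ)) ×ˢ Qc))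
      =ᵐ[ρ] ((univ : Set DisorderSpace) ×ˢ ((univ : Set (ℝ × ℝ)) ×ˢ Qo)) := by
    rw [MeasureTheory.ae_eq_set]
    constructor
    · apply measure_mono_null _ (hnullprod' (Qc \ Qo) null_Qc_diff_Qo)
      rintro p ⟨hp, hn⟩
      exact ⟨trivial, trivial, ⟨hp.2.2, fun hyo => hn ⟨trivial, trivial, hyo⟩⟩⟩
    · have hsub : ((univ : Set DisorderSpace) ×ˢ ((univ : Set (ℝ × ℝ)) ×ˢ Qo))
          ⊆ ((univ : Set DisorderSpace) ×ˢ ((univ : Set (ℝ × ℝ)) ×ˢ Qc)) :=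
        Set.prod_mono Subset.rfl (Set.prod_mono Subset.rfl hQoQc)
      rw [diff_eq_empty.2 hsub]
      exact measure_empty
  -- the measurable translation+shift equivalence
  have hIntFQo : IntegrableOn F ((univ : Set DisorderSpace) ×ˢ (Qo ×ˢ (univ : Set (ℝ × ℝ)))) ρ := by
    rw [IntegrableOn, ← hM]
    exact hIntF _ hGdQo
  have hIntFQo' : IntegrableOn F ((univ : Set DisorderSpace) ×ˢ ((univ : Set (ℝ × ℝ)) ×ˢ Qo)) ρ := by
    rw [IntegrableOn, ← hM]
    exact hIntF _ hGdQo'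
  -- Tiling families
  have hmeas1 : ∀ γ : ℤ × ℤ, MeasurableSet
      ((univ : Set DisorderSpace) ×ˢ (Qo ×ˢ Tile γ)) := fun γ =>
    MeasurableSet.univ.prod (measurableSet_Qo.prod (measurableSet_Tile γ))
  have hmeas2 : ∀ γ : ℤ × ℤ, MeasurableSet
      ((univ : Set DisorderSpace) ×ˢ (Tile (-γ) ×ˢ Qo)) := fun γ =>
    MeasurableSet.univ.prod ((measurableSet_Tile (-γ)).prod measurableSet_Qo)
  have hdisj1 : Pairwise (Function.onFun Disjoint
      (fun γ : ℤ × ℤ => (univ : Set DisorderSpace) ×ˢ (Qo ×ˢ Tile γ))) := by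
    intro γ γ' hne
    have := pairwise_disjoint_Tile hne
    rw [Function.onFun, Set.disjoint_left] at this ⊢
    rintro p hp hp'
    exact this hp.2.2 hp'.2.2
  have hdisj2 : Pairwise (Function.onFun Disjoint
      (fun γ : ℤ × ℤ => (univ : Set DisorderSpace) ×ˢ (Tile (-γ) ×ˢ Qo))) := by
    intro γ γ' hne
    have hne' : -γ ≠ -γ' := fun h => hne (neg_injective h)
    have := pairwise_disjoint_Tile hne'
    rw [Function.onFun, Set.disjoint_left] at this ⊢
    rintro p hp hp'
    exact this hp.2.1 hp'.2.1
  have hUnion1 : (⋃ γ : ℤ × ℤ, (univ : Set DisorderSpace) ×ˢ (Qo ×ˢ Tile γ))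
      = (univ : Set DisorderSpace) ×ˢ (Qo ×ˢ (univ : Set (ℝ × ℝ))) := by
    ext p
    constructor
    · intro hp
      obtain ⟨γ, hγ⟩ := mem_iUnion.1 hp
      exact ⟨trivial, hγ.2.1, trivial⟩
    · rintro ⟨-, hQ, -⟩
      have hmem : p.2.2 ∈ ⋃ γ : ℤ × ℤ, Tile γ := by rw [iUnion_Tile]; trivial
      obtain ⟨γ, hγ⟩ := mem_iUnion.1 hmem
      exact mem_iUnion.2 ⟨γ, ⟨trivial, hQ, hγ⟩⟩
  have hUnion2 : (⋃ γ : ℤ × ℤ, (univ : Set DisorderSpace) ×ˢ (Tile (-γ) ×ˢ Qo))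
      = (univ : Set DisorderSpace) ×ˢ ((univ : Set (ℝ × ℝ)) ×ˢ Qo) := by
    ext p
    constructor
    · intro hp
      obtain ⟨γ, hγ⟩ := mem_iUnion.1 hp
      exact ⟨trivial, trivial, hγ.2.2⟩
    · rintro ⟨-, -, hQ⟩
      have hmem : p.2.1 ∈ ⋃ γ : ℤ × ℤ, Tile γ := by rw [iUnion_Tile]; trivial
      obtain ⟨γ₀, hγ⟩ := mem_iUnion.1 hmem
      refine mem_iUnion.2 ⟨-γ₀, ⟨trivial, ?_, hQ⟩⟩
      rwa [neg_neg]
  -- the per-tile change of variables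
  have hstep : ∀ γ : ℤ × ℤ,
      (∫ p in (univ : Set DisorderSpace) ×ˢ (Qo ×ˢ Tile γ), F p ∂ρ)
      = ∫ p in (univ : Set DisorderSpace) ×ˢ (Tile (-γ) ×ˢ Qo), F p ∂ρ := by
    intro γ
    set cγ : (ℝ × ℝ) × (ℝ × ℝ) := (latR2 γ, latR2 γ) with hcγ
    set e : (DisorderSpace × ((ℝ × ℝ) × (ℝ × ℝ))) ≃ᵐ (DisorderSpace × ((ℝ × ℝ) × (ℝ × ℝ))) :=
      (shiftEquiv γ).prodCongr (Homeomorph.toMeasurableEquiv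
        (Homeomorph.addRight cγ)) with hedef
    have hecoe : ∀ p : DisorderSpace × ((ℝ × ℝ) × (ℝ × ℝ)),
        e p = (disorderShift γ p.1, p.2 + cγ) := fun p => rfl
    have hmap : Measure.map e ρ = ρ := by
      have h1 : (e : DisorderSpace × ((ℝ × ℝ) × (ℝ × ℝ)) → _)
          = Prod.map (disorderShift γ) (fun q => q + cγ) := by
        funext p
        exact hecoe p
      rw [h1, hρdef]
      rw [← Measure.map_prod_map _ _ (measurable_disorderShift γ) (measurable_add_const cγ)]
      rw [map_shift_eq μ0 P hP γ]
      rw [map_add_right_eq_self (volume : Measure ((ℝ × ℝ) × (ℝ × ℝ))) cγ]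
    have h1 : (∫ p in (univ : Set DisorderSpace) ×ˢ (Qo ×ˢ Tile γ), F p ∂ρ)
        = ∫ p in e ⁻¹' ((univ : Set DisorderSpace) ×ˢ (Qo ×ˢ Tile γ)), F (e p) ∂ρ := by
      conv_lhs => rw [← hmap]
      rw [setIntegral_map_equiv]
    rw [h1]
    have hpre : e ⁻¹' ((univ : Set DisorderSpace) ×ˢ (Qo ×ˢ Tile γ))
        = (univ : Set DisorderSpace) ×ˢ (Tile (-γ) ×ˢ Qo) := by
      ext p
      constructor
      · intro hp
        obtain ⟨-, h1, h2⟩ := hp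
        refine ⟨trivial, ?_, ?_⟩
        · rw [Tile_neg_eq]
          exact h1
        · have h2' : (p.2.2 + latR2 γ) - latR2 γ ∈ Qo := h2
          rwa [add_sub_cancel_right] at h2'
      · rintro ⟨-, h1, h2⟩
        refine ⟨trivial, ?_, ?_⟩
        · rw [Tile_neg_eq] at h1
          exact h1
        · show (p.2.2 + latR2 γ) - latR2 γ ∈ Qo
          rwa [add_sub_cancel_right]
    have hfe : ∀ p, F (e p) = F p := by
      intro p
      show A (disorderShift γ p.1) (p.2.1 + latR2 γ) (p.2.2 + latR2 γ)
          * B (disorderShift γ p.1) (p.2.2 + latR2 γ) (p.2.1 + latR2 γ) = F p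
      rw [← hcov γ p.1 (p.2.1 + latR2 γ) (p.2.2 + latR2 γ)]
      rw [add_sub_cancel_right, add_sub_cancel_right]
    rw [hpre]
    apply integral_congr_ae
    apply Eventually.of_forall
    intro p
    exact hfe p
  -- swap of the two space variables
  have hswap : (∫ p in (univ : Set DisorderSpace) ×ˢ (Qc ×ˢ (univ : Set (ℝ × ℝ))), G p ∂ρ)
      = ∫ p in (univ : Set DisorderSpace) ×ˢ ((univ : Set (ℝ × ℝ)) ×ˢ Qc), F p ∂ρ := by
    set es : (DisorderSpace × ((ℝ × ℝ) × (ℝ × ℝ))) ≃ᵐ (DisorderSpace × ((ℝ × ℝ) × (ℝ × ℝ))) :=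
      (MeasurableEquiv.refl DisorderSpace).prodCongr
        (MeasurableEquiv.prodComm (α := ℝ × ℝ) (β := ℝ × ℝ)) with hesdef
    have hescoe : ∀ p : DisorderSpace × ((ℝ × ℝ) × (ℝ × ℝ)),
        es p = (p.1, (p.2.2, p.2.1)) := fun p => rfl
    have hmaps : Measure.map es ρ = ρ := by
      have h1 : (es : DisorderSpace × ((ℝ × ℝ) × (ℝ × ℝ)) → _)
          = Prod.map id (Prod.swap) := by
        funext p
        exact hescoe p
      rw [h1, hρdef]
      rw [← Measure.map_prod_map _ _ measurable_id measurable_swap]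
      rw [Measure.map_id]
      congr 1
      rw [Measure.volume_eq_prod, Measure.prod_swap]
    conv_lhs => rw [← hmaps]
    rw [setIntegral_map_equiv]
    have hpre : es ⁻¹' ((univ : Set DisorderSpace) ×ˢ (Qc ×ˢ (univ : Set (ℝ × ℝ))))
        = (univ : Set DisorderSpace) ×ˢ ((univ : Set (ℝ × ℝ)) ×ˢ Qc) := by
      ext p
      constructor
      · rintro ⟨-, h1, -⟩
        exact ⟨trivial, trivial, h1⟩
      · rintro ⟨-, -, h2⟩
        exact ⟨trivial, h2, trivial⟩
    rw [hpre]
    apply integral_congr_ae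
    apply Eventually.of_forall
    intro p
    show B p.1 p.2.2 p.2.1 * A p.1 p.2.1 p.2.2 = F p
    rw [hFdef]
    dsimp only
    ring
  -- assemble the chain
  rw [hswap]
  calc (∫ p in (univ : Set DisorderSpace) ×ˢ (Qc ×ˢ (univ : Set (ℝ × ℝ))), F p ∂ρ)
      = ∫ p in (univ : Set DisorderSpace) ×ˢ (Qo ×ˢ (univ : Set (ℝ × ℝ))), F p ∂ρ :=
        setIntegral_congr_set hsetae1
    _ = ∑' γ : ℤ × ℤ, ∫ p in (univ : Set DisorderSpace) ×ˢ (Qo ×ˢ Tile γ), F p ∂ρ := by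
        rw [← hUnion1]
        apply integral_iUnion hmeas1 hdisj1
        rw [hUnion1]
        exact hIntFQo
    _ = ∑' γ : ℤ × ℤ, ∫ p in (univ : Set DisorderSpace) ×ˢ (Tile (-γ) ×ˢ Qo), F p ∂ρ := by
        apply tsum_congr
        intro γ
        exact hstep γ
    _ = ∫ p in (univ : Set DisorderSpace) ×ˢ ((univ : Set (ℝ × ℝ)) ×ˢ Qo), F p ∂ρ := by
        rw [← hUnion2]
        symm
        apply integral_iUnion hmeas2 hdisj2
        rw [hUnion2]
        exact hIntFQo'
    _ = ∫ p in (univ : Set DisorderSpace) ×ˢ ((univ : Set (ℝ × ℝ)) ×ˢ Qc), F p ∂ρ :=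
        (setIntegral_congr_set hsetae2).symm

end
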